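/- Let p be an odd prime and let λ be a JM-partition of n. Let α := (λ'(0))', where λ'(0) is the 0-th term of the p-adic expansion of the conjugate partition λ' (so α is the first component of Φ(λ) = ((λ'(0))' | λ' − λ'(0)), the partition obtained from λ by stripping off all vertical p-hooks). Then α is a p-regular partition and α is a JM-partition. -/
import Mathlib


/-- A partition, encoded as the weakly decreasing, eventually zero sequence of its parts. -/
def IsPartition (f : ℕ → ℕ) : Prop :=
  Antitone f ∧ ∃ N, ∀ i, N ≤ i → f i = 0

/-- `f` is a partition of `n`. -/
def IsPartitionOf (n : ℕ) (f : ℕ → ℕ) : Prop :=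
  IsPartition f ∧ ∃ N, (∀ i, N ≤ i → f i = 0) ∧ ∑ i ∈ Finset.range N, f i = n

/-- A partition is `p`-restricted if successive parts differ by at most `p - 1`. -/
def IsPRestricted (p : ℕ) (f : ℕ → ℕ) : Prop :=
  IsPartition f ∧ ∀ i, f i - f (i + 1) ≤ p - 1

/-- `c` is a `p`-adic expansion of the partition `f`. -/
def IsPAdicExpansion (p : ℕ) (f : ℕ → ℕ) (c : ℕ → ℕ → ℕ) : Prop :=
  (∀ i, IsPRestricted p (c i)) ∧
  ∃ N, (∀ i j, N ≤ i → c i j = 0) ∧ ∀ j, f j = ∑ i ∈ Finset.range N, p ^ i * c i j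

/-- The conjugate partition. -/
noncomputable def conjugate (f : ℕ → ℕ) : ℕ → ℕ :=
  fun j => Nat.card {i : ℕ | j < f i}

/-- Hook length of the node `(i, j)` (0-indexed). -/
noncomputable def hookLength (f : ℕ → ℕ) (i j : ℕ) : ℕ :=
  (f i - (j + 1)) + (conjugate f j - (i + 1)) + 1

/-- `f` is a JM-partition for the prime `p`. -/
def IsJM (p : ℕ) (f : ℕ → ℕ) : Prop :=
  ¬ ∃ a b x y : ℕ, b < f a ∧ y < f a ∧ b < f x ∧
      0 < padicValNat p (hookLength f a b) ∧
      padicValNat p (hookLength f x b) ≠ padicValNat p (hookLength f a b) ∧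
      padicValNat p (hookLength f a y) ≠ padicValNat p (hookLength f a b)

/-- A partition is `p`-singular if it has `p` consecutive equal nonzero parts. -/
def IsPSingular (p : ℕ) (f : ℕ → ℕ) : Prop :=
  ∃ i, 0 < f (i + p - 1) ∧ f i = f (i + p - 1)

/-- A partition is `p`-regular if it is not `p`-singular. -/
def IsPRegular (p : ℕ) (f : ℕ → ℕ) : Prop := ¬ IsPSingular p f

/- ### Auxiliary lemmas -/

private lemma nat_eq_of_lt_iff {a b : ℕ} (h : ∀ i, i < a ↔ i < b) : a = b := by
  rcases Nat.lt_or_ge a b with hl | hg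
  · have := (h a).mpr hl; omega
  · rcases Nat.lt_or_ge b a with hl2 | hle
    · have := (h b).mp hl2; omega
    · omega

lemma conj_char {f : ℕ → ℕ} (hf : IsPartition f) (j i : ℕ) :
    j < f i ↔ i < conjugate f j := by
  obtain ⟨hanti, N, hN⟩ := hf
  have hne : {i : ℕ | f i ≤ j}.Nonempty := ⟨N, by simp [hN N le_rfl]⟩
  set m := sInf {i : ℕ | f i ≤ j} with hm
  have hmem : f m ≤ j := Nat.sInf_mem hne
  have hiff : ∀ i, j < f i ↔ i < m := by
    intro i
    constructor
    · intro h
      by_contra hc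
      push_neg at hc
      have := hanti hc
      omega
    · intro h
      have h2 := Nat.notMem_of_lt_sInf (s := {i : ℕ | f i ≤ j}) (by rw [← hm] at *; exact h)
      simp only [Set.mem_setOf_eq, not_le] at h2
      exact h2
  have hset : {i : ℕ | j < f i} = Set.Iio m := Set.ext fun i => hiff i
  have hconj : conjugate f j = m := by
    show Nat.card {i : ℕ | j < f i} = m
    have hr : (Set.Iio m) = ↑(Finset.range m) := by rw [Finset.coe_range]
    rw [hset, hr, Nat.card_coe_set_eq, Set.ncard_coe_finset, Finset.card_range]
  rw [hconj]
  exact hiff i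

lemma conj_partition {f : ℕ → ℕ} (hf : IsPartition f) : IsPartition (conjugate f) := by
  constructor
  · intro j j' hjj'
    by_contra hc
    push_neg at hc
    have h1 : j' < f (conjugate f j) := (conj_char hf j' _).mpr hc
    have h2 : ¬ j < f (conjugate f j) := fun h => lt_irrefl _ ((conj_char hf j _).mp h)
    omega
  · refine ⟨f 0, fun j hj => ?_⟩
    by_contra hc
    have h1 : j < f 0 := (conj_char hf j 0).mpr (by omega)
    omega

lemma conj_conj {f : ℕ → ℕ} (hf : IsPartition f) : conjugate (conjugate f) = f := by
  funext j
  apply nat_eq_of_lt_iff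
  intro i
  rw [← conj_char (conj_partition hf) j i]
  exact (conj_char hf i j).symm

lemma conj_eq {f : ℕ → ℕ} (hf : IsPartition f) {j m : ℕ} (h : ∀ i, j < f i ↔ i < m) :
    conjugate f j = m := by
  apply nat_eq_of_lt_iff
  intro i
  rw [← conj_char hf j i]
  exact h i

lemma hook_ge_one (f : ℕ → ℕ) (i j : ℕ) : 0 < hookLength f i j := by
  unfold hookLength; omega

lemma hook_conj {f : ℕ → ℕ} (hf : IsPartition f) (i j : ℕ) :
    hookLength (conjugate f) i j = hookLength f j i := by
  unfold hookLength
  rw [conj_conj hf]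
  omega

lemma jm_conj {p : ℕ} {f : ℕ → ℕ} (hf : IsPartition f) (h : IsJM p f) :
    IsJM p (conjugate f) := by
  rintro ⟨a, b, x, y, h1, h2, h3, h4, h5, h6⟩
  have key : ∀ u v : ℕ, u < conjugate f v ↔ v < f u := fun u v => (conj_char hf v u).symm
  simp only [hook_conj hf] at h4 h5 h6
  exact h ⟨b, a, y, x, (key b a).mp h1, (key b x).mp h3, (key y a).mp h2, h4, h6, h5⟩

lemma regular_of_restricted {p : ℕ} (hp2 : 2 ≤ p) {g : ℕ → ℕ} (hg : IsPartition g)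
    (hres : ∀ i, g i - g (i + 1) ≤ p - 1) : IsPRegular p (conjugate g) := by
  rintro ⟨i, hpos, heq⟩
  have h1 : i + p - 1 < g (conjugate g (i + p - 1) - 1) :=
    (conj_char hg (i + p - 1) _).mpr (by omega)
  have h2 : ¬ i < g (conjugate g (i + p - 1)) := by
    intro h
    have h5 := (conj_char hg i (conjugate g (i + p - 1))).mp h
    omega
  have h3 := hres (conjugate g (i + p - 1) - 1)
  have h4 : conjugate g (i + p - 1) - 1 + 1 = conjugate g (i + p - 1) := by omega
  rw [h4] at h3
  omega

lemma padic_pos {p n : ℕ} (hp : p.Prime) (hn : 0 < n) (hd : p ∣ n) :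
    0 < padicValNat p n := by
  rcases Nat.eq_zero_or_pos (padicValNat p n) with h | h
  · rw [padicValNat.eq_zero_iff] at h
    rcases h with h | h | h
    · exact absurd h hp.ne_one
    · omega
    · exact absurd hd h
  · exact h

lemma padic_dvd {p n : ℕ} (hp : p.Prime) (h : 0 < padicValNat p n) : p ∣ n := by
  by_contra hc
  rw [padicValNat.eq_zero_of_not_dvd hc] at h
  omega

/-- The key lemma: if `μ` is a JM-partition and `g` is a partition whose successive
differences are those of `μ` reduced mod `p`, then `g` is a JM-partition. -/
lemma main_JM {p : ℕ} (hp : p.Prime) {μ g : ℕ → ℕ}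
    (hμpart : IsPartition μ) (hJMμ : IsJM p μ) (hgpart : IsPartition g)
    (hdrop : ∀ j, g j - g (j + 1) = (μ j - μ (j + 1)) % p) : IsJM p g := by
  have hp2 : 2 ≤ p := hp.two_le
  have hμanti : Antitone μ := hμpart.1
  have hganti : Antitone g := hgpart.1
  obtain ⟨Mμ, hMμ⟩ := hμpart.2
  obtain ⟨Mg, hMg⟩ := hgpart.2
  have hcμ : ∀ j i, j < μ i ↔ i < conjugate μ j := conj_char hμpart
  have hcg : ∀ j i, j < g i ↔ i < conjugate g j := conj_char hgpart
  -- downward-induction equality propagation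
  have heqgen : ∀ K, (∀ k, K ≤ k → μ k - μ (k + 1) < p) → ∀ k, K ≤ k → g k = μ k := by
    intro K hK
    have key : ∀ t k, K ≤ k → Mμ + Mg ≤ k + t → g k = μ k := by
      intro t
      induction t with
      | zero =>
        intro k hk hM
        rw [hMμ k (by omega), hMg k (by omega)]
      | succ t ih =>
        intro k hk hM
        by_cases hkM : Mμ + Mg ≤ k
        · rw [hMμ k (by omega), hMg k (by omega)]
        · have h1 := ih (k + 1) (by omega) (by omega)
          have h2 := hdrop k
          rw [Nat.mod_eq_of_lt (hK k hk)] at h2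
          have h3 := hganti (show k ≤ k + 1 by omega)
          have h4 := hμanti (show k ≤ k + 1 by omega)
          omega
    exact fun k hk => key (Mμ + Mg) k hk (by omega)
  by_cases hbig : ∃ k, p ≤ μ k - μ (k + 1)
  · -- there is a big column drop
    obtain ⟨k₀, hk₀⟩ := hbig
    have hk₀M : k₀ ≤ Mμ + Mg := by
      by_contra hc
      have h5 := hMμ k₀ (by omega)
      have h6 := hμanti (show k₀ ≤ k₀ + 1 by omega)
      omega
    obtain ⟨J, hJ, hgr⟩ :
        ∃ J, (p ≤ μ J - μ (J + 1)) ∧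
          ∀ k, J < k → k ≤ Mμ + Mg → ¬ p ≤ μ k - μ (k + 1) :=
      ⟨Nat.findGreatest (fun k => p ≤ μ k - μ (k + 1)) (Mμ + Mg),
        Nat.findGreatest_spec (P := fun k => p ≤ μ k - μ (k + 1)) hk₀M hk₀,
        fun k hk hkM =>
          Nat.findGreatest_is_greatest (P := fun k => p ≤ μ k - μ (k + 1)) hk hkM⟩
    have hdle : ∀ k, J < k → μ k - μ (k + 1) < p := by
      intro k hk
      by_cases hkM : k ≤ Mμ + Mg
      · have := hgr k hk hkM; omega
      · have h5 := hMμ k (by omega)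
        have h6 := hμanti (show k ≤ k + 1 by omega)
        omega
    have hF1 : ∀ k, J + 1 ≤ k → g k = μ k := heqgen (J + 1) (fun k hk => hdle k (by omega))
    have hμJ1 : μ (J + 1) + p ≤ μ J := by
      have := hμanti (show J ≤ J + 1 by omega); omega
    -- the two special columns in row J
    have hyc_col : conjugate μ (μ J - (p - 1)) = J + 1 := by
      apply conj_eq hμpart
      intro i
      constructor
      · intro h
        by_contra hc
        have h7 : μ i ≤ μ (J + 1) := hμanti (by omega)
        omega
      · intro h
        have h7 : μ J ≤ μ i := hμanti (by omega)
        omega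
    have hc_col : conjugate μ (μ J - p) = J + 1 := by
      apply conj_eq hμpart
      intro i
      constructor
      · intro h
        by_contra hc
        have h7 : μ i ≤ μ (J + 1) := hμanti (by omega)
        omega
      · intro h
        have h7 : μ J ≤ μ i := hμanti (by omega)
        omega
    have hval_yc : padicValNat p (hookLength μ J (μ J - (p - 1))) = 0 := by
      have hh : hookLength μ J (μ J - (p - 1)) = p - 1 := by
        unfold hookLength
        rw [hyc_col]
        omega
      rw [hh]
      apply padicValNat.eq_zero_of_not_dvd
      intro hdvd
      have := Nat.eq_zero_of_dvd_of_lt hdvd (by omega)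
      omega
    have hval_c1 : padicValNat p (hookLength μ J (μ J - p)) = 1 := by
      have hh : hookLength μ J (μ J - p) = p := by
        unfold hookLength
        rw [hc_col]
        omega
      rw [hh]
      exact padicValNat.self hp.one_lt
    -- Lemma D : all drops above J are ≡ -1 mod p
    have hD : ∀ k, k < J → (μ k - μ (k + 1)) % p = p - 1 := by
      have hcol : ∀ x, x ≤ J → padicValNat p (hookLength μ x (μ J - p)) = 1 := by
        intro x hx
        by_contra hne
        apply hJMμ
        refine ⟨J, μ J - p, x, μ J - (p - 1), by omega, by omega, ?_, ?_, ?_, ?_⟩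
        · have : μ J ≤ μ x := hμanti hx
          omega
        · rw [hval_c1]; omega
        · rw [hval_c1]; exact hne
        · rw [hval_yc, hval_c1]; omega
      have hhook : ∀ x, x ≤ J → hookLength μ x (μ J - p) = (μ x - (μ J - p)) + (J - x) := by
        intro x hx
        have h8 : μ J ≤ μ x := hμanti hx
        unfold hookLength
        rw [hc_col]
        omega
      intro k hk
      have h1 : p ∣ hookLength μ k (μ J - p) :=
        padic_dvd hp (by rw [hcol k (by omega)]; omega)
      have h2 : p ∣ hookLength μ (k + 1) (μ J - p) :=
        padic_dvd hp (by rw [hcol (k + 1) (by omega)]; omega)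
      have h3 := Nat.dvd_sub h1 h2
      have h4 : hookLength μ k (μ J - p) - hookLength μ (k + 1) (μ J - p)
          = (μ k - μ (k + 1)) + 1 := by
        rw [hhook k (by omega), hhook (k + 1) (by omega)]
        have h9 : μ J ≤ μ (k + 1) := hμanti (by omega)
        have h10 : μ (k + 1) ≤ μ k := hμanti (show k ≤ k + 1 by omega)
        omega
      rw [h4] at h3
      obtain ⟨m, hm⟩ := h3
      rcases m with _ | m'
      · rw [Nat.mul_zero] at hm; omega
      · rw [Nat.mul_succ] at hm
        have h12 : μ k - μ (k + 1) = (p - 1) + p * m' := by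
          generalize p * m' = q at hm ⊢
          omega
        rw [h12, Nat.add_mul_mod_self_left, Nat.mod_eq_of_lt (by omega)]
    -- description of g
    have hgJ1 : g (J + 1) = μ (J + 1) := hF1 (J + 1) le_rfl
    obtain ⟨eJ, heJdef⟩ : ∃ e, (μ J - μ (J + 1)) % p = e := ⟨_, rfl⟩
    have heJlt : eJ < p := heJdef ▸ Nat.mod_lt _ (by omega)
    obtain ⟨qJ, hqJ⟩ : ∃ q, μ J - μ (J + 1) = p * q + eJ :=
      ⟨(μ J - μ (J + 1)) / p, by rw [← heJdef]; exact (Nat.div_add_mod _ _).symm⟩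
    have hgJ : g J = μ (J + 1) + eJ := by
      have h1 := hdrop J
      rw [heJdef] at h1
      have h2 := hganti (show J ≤ J + 1 by omega)
      omega
    have hF2 : ∀ t a, a + t ≤ J → g a + t = g (a + t) + t * p := by
      intro t
      induction t with
      | zero => intro a _; simp
      | succ t ih =>
        intro a ha
        have h1 := ih (a + 1) (by omega)
        have h2 := hdrop a
        rw [hD a (by omega)] at h2
        have h3 := hganti (show a ≤ a + 1 by omega)
        have h4 : a + 1 + t = a + (t + 1) := by omega
        rw [h4] at h1
        rw [add_one_mul]
        generalize t * p = w at h1 ⊢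
        omega
    have hF3 : ∀ j, j < μ (J + 1) → conjugate g j = conjugate μ j := by
      intro j hj
      have hsets : {i : ℕ | j < g i} = {i : ℕ | j < μ i} := by
        apply Set.ext
        intro i
        simp only [Set.mem_setOf_eq]
        by_cases hiJ : i ≤ J
        · have h1 : g J ≤ g i := hganti hiJ
          have h2 : μ (J + 1) ≤ μ i := hμanti (by omega)
          constructor
          · intro _; omega
          · intro _; omega
        · rw [hF1 i (by omega)]
      unfold conjugate
      rw [hsets]
    -- bottom node of any column meeting the tail has valuation 0
    have hbot : ∀ j, j < μ (J + 1) →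
        ∃ x0, j < μ x0 ∧ padicValNat p (hookLength μ x0 j) = 0 := by
      intro j hj
      have h1 : J + 1 < conjugate μ j := (hcμ j (J + 1)).mp hj
      refine ⟨conjugate μ j - 1, (hcμ j _).mpr (by omega), ?_⟩
      have h2 : ¬ j < μ (conjugate μ j) := by
        intro h
        have := (hcμ j _).mp h
        omega
      have h3 : conjugate μ j - 1 + 1 = conjugate μ j := by omega
      have h5 : j < μ (conjugate μ j - 1) := (hcμ j _).mpr (by omega)
      have h6 := hdle (conjugate μ j - 1) (by omega)
      rw [h3] at h6
      have hh : hookLength μ (conjugate μ j - 1) j = μ (conjugate μ j - 1) - j := by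
        unfold hookLength
        omega
      rw [hh]
      apply padicValNat.eq_zero_of_not_dvd
      intro hdvd
      have h7 := Nat.eq_zero_of_dvd_of_lt hdvd (by omega)
      omega
    -- Lemma G : no p-divisible hook in row J over the tail columns
    have hG : ∀ j, j < μ (J + 1) → ¬ p ∣ hookLength μ J j := by
      intro j hj hdvd
      obtain ⟨x0, hx0a, hx0b⟩ := hbot j hj
      have hpos := padic_pos hp (hook_ge_one μ J j) hdvd
      apply hJMμ
      refine ⟨J, j, x0, μ J - (p - 1), by omega, by omega, hx0a, hpos, ?_, ?_⟩
      · rw [hx0b]; omega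
      · rw [hval_yc]; omega
    -- now prove IsJM g
    rintro ⟨a, b, x, y, hb, hy, hbx, hval, hxne, hyne⟩
    have hpd : p ∣ hookLength g a b := padic_dvd hp hval
    by_cases haJ : a ≤ J
    · by_cases hbμ : b < μ (J + 1)
      · -- Case A : staircase row over a tail column
        have hconjb : conjugate g b = conjugate μ b := hF3 b hbμ
        have hJ2 : J + 1 < conjugate μ b := (hcμ b (J + 1)).mp hbμ
        have hstair := hF2 (J - a) a (by omega)
        have haJa : a + (J - a) = J := by omega
        rw [haJa] at hstair
        have hkey : hookLength g a b + p * qJ = hookLength μ J b + (J - a) * p := by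
          unfold hookLength
          rw [hconjb]
          generalize (J - a) * p = s at hstair ⊢
          generalize p * qJ = q at hqJ ⊢
          omega
        have hpq : p ∣ p * qJ := ⟨qJ, rfl⟩
        have hps : p ∣ (J - a) * p := ⟨J - a, Nat.mul_comm _ _⟩
        have h1 : p ∣ hookLength μ J b + (J - a) * p := by
          rw [← hkey]; exact dvd_add hpd hpq
        have h2 := Nat.dvd_sub h1 hps
        have h3 : hookLength μ J b + (J - a) * p - (J - a) * p = hookLength μ J b := by
          generalize (J - a) * p = s
          omega
        rw [h3] at h2
        exact hG b hbμ h2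
      · -- Case F4 : staircase row, staircase column
        push_neg at hbμ
        have hLpos : a < conjugate g b := (hcg b a).mp hb
        have hLJ : conjugate g b ≤ J + 1 := by
          by_contra hc
          have h1 : b < g (J + 1) := (hcg b (J + 1)).mpr (by omega)
          rw [hF1 (J + 1) le_rfl] at h1
          omega
        have hbL : b < g (conjugate g b - 1) := (hcg b _).mpr (by omega)
        have hgL1 : ¬ b < g (conjugate g b - 1 + 1) := by
          intro h
          have := (hcg b _).mp h
          omega
        have hdropL := hdrop (conjugate g b - 1)
        have hdropLlt : g (conjugate g b - 1) - g (conjugate g b - 1 + 1) < p := by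
          rw [hdropL]; exact Nat.mod_lt _ (by omega)
        have hstair := hF2 (conjugate g b - 1 - a) a (by omega)
        have haL : a + (conjugate g b - 1 - a) = conjugate g b - 1 := by omega
        rw [haL] at hstair
        have hkey : hookLength g a b
            = (g (conjugate g b - 1) - b) + (conjugate g b - 1 - a) * p := by
          unfold hookLength
          generalize (conjugate g b - 1 - a) * p = s at hstair ⊢
          omega
        have hps : p ∣ (conjugate g b - 1 - a) * p := ⟨conjugate g b - 1 - a, Nat.mul_comm _ _⟩
        rw [hkey] at hpd
        have h2 := Nat.dvd_sub hpd hps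
        have h3 : (g (conjugate g b - 1) - b) + (conjugate g b - 1 - a) * p
            - (conjugate g b - 1 - a) * p = g (conjugate g b - 1) - b := by
          generalize (conjugate g b - 1 - a) * p = s
          omega
        rw [h3] at h2
        have h4 := Nat.le_of_dvd (by omega) h2
        omega
    · -- Case B : tail row, identical to μ
      push_neg at haJ
      have hga : g a = μ a := hF1 a (by omega)
      have hμa1 : μ a ≤ μ (J + 1) := hμanti (by omega)
      have hbμ : b < μ (J + 1) := by omega
      have hyμ : y < μ (J + 1) := by omega
      have hhb : hookLength g a b = hookLength μ a b := by
        unfold hookLength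
        rw [hga, hF3 b hbμ]
      have hhy : hookLength g a y = hookLength μ a y := by
        unfold hookLength
        rw [hga, hF3 y hyμ]
      obtain ⟨x0, hx0a, hx0b⟩ := hbot b hbμ
      have hvalμ : 0 < padicValNat p (hookLength μ a b) := by rwa [hhb] at hval
      have hrow : padicValNat p (hookLength μ a y) = padicValNat p (hookLength μ a b) := by
        by_contra hne
        exact hJMμ ⟨a, b, x0, y, by omega, by omega, hx0a, hvalμ, by rw [hx0b]; omega, hne⟩
      apply hyne
      rw [hhy, hhb]
      exact hrow
  · -- no big drop : g = μ
    push_neg at hbig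
    have hgμ : g = μ := funext fun k => heqgen 0 (fun k _ => hbig k) k (Nat.zero_le k)
    rw [hgμ]
    exact hJMμ

/-- For an odd prime `p` and a JM-partition `f` of `n`, the partition
`α = (λ'(0))'` (the first component of `Φ(f)`, obtained from `f` by stripping off all
vertical `p`-hooks) is a `p`-regular JM-partition. -/
theorem first_component_of_Phi_pRegular_JM (p : ℕ) (hp : p.Prime) (hodd : Odd p)
    (n : ℕ) (f : ℕ → ℕ) (hf : IsPartitionOf n f) (hJM : IsJM p f)
    (c' : ℕ → ℕ → ℕ) (hc' : IsPAdicExpansion p (conjugate f) c') :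
    IsPRegular p (conjugate (c' 0)) ∧ IsJM p (conjugate (c' 0)) := by
  obtain ⟨hfpart, -⟩ := hf
  have hp2 : 2 ≤ p := hp.two_le
  obtain ⟨hrestr, N, hvan, hsum⟩ := hc'
  have hgpart : IsPartition (c' 0) := (hrestr 0).1
  have hμpart : IsPartition (conjugate f) := conj_partition hfpart
  have hμanti : Antitone (conjugate f) := hμpart.1
  have hdrop : ∀ j, c' 0 j - c' 0 (j + 1) = (conjugate f j - conjugate f (j + 1)) % p := by
    intro j
    rcases Nat.eq_zero_or_pos N with hN0 | hN0
    · have h1 : c' 0 j = 0 := hvan 0 j (by omega)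
      have h2 : c' 0 (j + 1) = 0 := hvan 0 (j + 1) (by omega)
      have h3 : conjugate f j = 0 := by
        rw [hsum j, hN0, Finset.range_zero, Finset.sum_empty]
      have h4 : conjugate f (j + 1) = 0 := by
        rw [hsum (j + 1), hN0, Finset.range_zero, Finset.sum_empty]
      rw [h1, h2, h3, h4]
      simp
    · obtain ⟨N', rfl⟩ : ∃ N', N = N' + 1 := ⟨N - 1, by omega⟩
      have hsub : conjugate f (j + 1)
          + ∑ i ∈ Finset.range (N' + 1), p ^ i * (c' i j - c' i (j + 1))
          = conjugate f j := by
        rw [hsum j, hsum (j + 1), ← Finset.sum_add_distrib]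
        refine Finset.sum_congr rfl fun i _ => ?_
        have h5 : c' i (j + 1) ≤ c' i j := (hrestr i).1.1 (show j ≤ j + 1 by omega)
        rw [← Nat.mul_add]
        congr 1
        omega
      have hS : ∑ i ∈ Finset.range (N' + 1), p ^ i * (c' i j - c' i (j + 1))
          = p * (∑ i ∈ Finset.range N', p ^ i * (c' (i + 1) j - c' (i + 1) (j + 1)))
            + (c' 0 j - c' 0 (j + 1)) := by
        rw [Finset.sum_range_succ', Finset.mul_sum]
        congr 1
        · refine Finset.sum_congr rfl fun i _ => ?_
          rw [pow_succ']
          rw [mul_assoc]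
        · simp
      have hmono : conjugate f (j + 1) ≤ conjugate f j := hμanti (show j ≤ j + 1 by omega)
      have ha0 : c' 0 j - c' 0 (j + 1) < p := by
        have := (hrestr 0).2 j
        omega
      have hμd : conjugate f j - conjugate f (j + 1)
          = p * (∑ i ∈ Finset.range N', p ^ i * (c' (i + 1) j - c' (i + 1) (j + 1)))
            + (c' 0 j - c' 0 (j + 1)) := by
        rw [← hS]
        omega
      rw [hμd, Nat.mul_add_mod, Nat.mod_eq_of_lt ha0]
  constructor
  · exact regular_of_restricted hp2 hgpart (hrestr 0).2
  · exact jm_conj hgpart (main_JM hp hμpart (jm_conj hfpart hJM) hgpart hdrop)
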